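/- Let X ⊆ ℝⁿ be a nonempty convex set, let x ∈ X, p > 0, α > 0, and let d ∈ ℝⁿ with x + d ∈ X. Let g₀, g₁ : ℝⁿ → ℝ be differentiable at x with gradients ∇g₀(x), ∇g₁(x); let h₀, h₁ : ℝⁿ → ℝ be locally Lipschitz around x; and let v₀, v₁ ∈ ℝⁿ satisfy (−h_i)'(x; d) ≤ ⟨−v_i, d⟩ for i = 0, 1. Let λ ∈ [0,1] satisfy λ · min{φ₁(x) + ⟨∇g₁(x) − v₁, d⟩, 0} = 0 and (1 − λ) · max{φ₁(x) + ⟨∇g₁(x) − v₁, d⟩, 0} = 0, where φ₁ := g₁ − h₁, and suppose that for every u ∈ X, ⟨(1/p)(∇g₀(x) − v₀) + λ(∇g₁(x) − v₁) + α d, u − (x + d)⟩ ≥ 0. Then (φ_p)'(x; d) ≤ (1/p)⟨∇g₀(x) − v₀, d⟩ + λ⟨∇g₁(x) − v₁, d⟩ ≤ −α‖d‖². -/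

import Mathlib

open Filter
open scoped RealInnerProductSpace

/-- The upper directional derivative of `f` at `x` in direction `d`:
`f'(x; d) := limsup_{t → 0⁺} (f(x + t d) − f(x))/t`. -/
noncomputable def upperDirDeriv {n : ℕ} (f : EuclideanSpace ℝ (Fin n) → ℝ)
    (x d : EuclideanSpace ℝ (Fin n)) : ℝ :=
  Filter.limsup (fun t : ℝ => (f (x + t • d) - f x) / t) (nhdsWithin 0 (Set.Ioi 0))


section aux
variable {n : ℕ}
local notation "E" => EuclideanSpace ℝ (Fin n)

lemma grad_slope {g : E → ℝ} {u x d : E} (hg : HasGradientAt g u x) :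
    Tendsto (fun t : ℝ => (g (x + t • d) - g x) / t) (nhdsWithin 0 (Set.Ioi 0))
      (nhds ⟪u, d⟫) := by
  have hL : HasDerivAt (fun t : ℝ => x + t • d) d 0 := by
    simpa using ((hasDerivAt_id (0:ℝ)).smul_const d).const_add x
  have hcomp : HasDerivAt (fun t : ℝ => g (x + t • d)) ⟪u, d⟫ 0 := by
    have h := hg.hasFDerivAt.comp_hasDerivAt_of_eq 0 hL (by simp)
    simpa [InnerProductSpace.toDual_apply_apply, Function.comp_def] using h
  have h1 := hasDerivAt_iff_tendsto_slope.mp hcomp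
  have h2 : Tendsto (slope (fun t : ℝ => g (x + t • d)) 0) (nhdsWithin 0 (Set.Ioi 0))
      (nhds ⟪u, d⟫) := h1.mono_left (nhdsWithin_mono _ (by intro t ht; simpa using ne_of_gt ht))
  refine h2.congr' ?_
  filter_upwards [self_mem_nhdsWithin] with t ht
  simp [slope_def_field, div_eq_inv_mul]

lemma path_tendsto (x d : E) :
    Tendsto (fun t : ℝ => x + t • d) (nhdsWithin 0 (Set.Ioi 0)) (nhds x) := by
  have hc : Continuous fun t : ℝ => x + t • d := by continuity
  have h2 := (hc.tendsto 0).mono_left (nhdsWithin_le_nhds (s := Set.Ioi 0))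
  simpa using h2

lemma lip_bound {h : E → ℝ} {x : E} (d : E)
    (hh : ∃ K : NNReal, ∃ U ∈ nhds x, LipschitzOnWith K h U) :
    ∃ C : ℝ, ∀ᶠ t in nhdsWithin (0:ℝ) (Set.Ioi 0), |(h (x + t • d) - h x) / t| ≤ C := by
  obtain ⟨K, U, hU, hlip⟩ := hh
  refine ⟨K * ‖d‖, ?_⟩
  have hxU : x ∈ U := mem_of_mem_nhds hU
  filter_upwards [(path_tendsto x d).eventually_mem hU, self_mem_nhdsWithin] with t htU ht
  have ht0 : (0:ℝ) < t := ht
  have hdist := hlip.dist_le_mul _ htU _ hxU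
  rw [Real.dist_eq] at hdist
  have hd : dist (x + t • d) x = t * ‖d‖ := by
    rw [dist_eq_norm]; simp [norm_smul, abs_of_pos ht0]
  rw [hd] at hdist
  rw [abs_div, abs_of_pos ht0, div_le_iff₀ ht0]
  calc |h (x + t • d) - h x| ≤ K * (t * ‖d‖) := hdist
    _ = K * ‖d‖ * t := by ring

lemma ev_lt_of_upper {h : E → ℝ} {x d v : E}
    (hh : ∃ K : NNReal, ∃ U ∈ nhds x, LipschitzOnWith K h U)
    (hv : upperDirDeriv (fun y => -h y) x d ≤ ⟪-v, d⟫) {ε : ℝ} (hε : 0 < ε) :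
    ∀ᶠ t in nhdsWithin (0:ℝ) (Set.Ioi 0), (-h (x + t • d) + h x) / t < ⟪-v, d⟫ + ε := by
  obtain ⟨C, hC⟩ := lip_bound d hh
  have hbd : IsBoundedUnder (· ≤ ·) (nhdsWithin (0:ℝ) (Set.Ioi 0))
      (fun t => ((fun y => -h y) (x + t • d) - (fun y => -h y) x) / t) := by
    apply isBoundedUnder_of_eventually_le (a := C)
    filter_upwards [hC] with t ht
    have : ((fun y => -h y) (x + t • d) - (fun y => -h y) x) / t
        = -((h (x + t • d) - h x) / t) := by ring
    rw [this]
    calc -((h (x + t • d) - h x) / t) ≤ |(h (x + t • d) - h x) / t| := neg_le_abs _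
      _ ≤ C := ht
  have hlt : upperDirDeriv (fun y => -h y) x d < ⟪-v, d⟫ + ε :=
    lt_of_le_of_lt hv (lt_add_of_pos_right _ hε)
  have := eventually_lt_of_limsup_lt hlt hbd
  filter_upwards [this] with t ht
  have heq : ((fun y => -h y) (x + t • d) - (fun y => -h y) x) / t
      = (-h (x + t • d) + h x) / t := by ring_nf
  rw [heq] at ht; exact ht

end aux

set_option maxHeartbeats 1000000 in
/-- descent property of the subproblem solution for the penalty function
`φ_p(x) := (1/p)(g₀(x) − h₀(x)) + max{g₁(x) − h₁(x), 0}`: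
`(φ_p)'(x; d) ≤ (1/p)⟨∇g₀(x) − v₀, d⟩ + λ⟨∇g₁(x) − v₁, d⟩ ≤ −α‖d‖²`. -/
theorem penalty_descent_direction {n : ℕ} (X : Set (EuclideanSpace ℝ (Fin n)))
    (hXne : X.Nonempty) (hXconv : Convex ℝ X)
    (x : EuclideanSpace ℝ (Fin n)) (hx : x ∈ X)
    (p α : ℝ) (hp : 0 < p) (hα : 0 < α)
    (d : EuclideanSpace ℝ (Fin n)) (hdX : x + d ∈ X)
    (g₀ g₁ h₀ h₁ : EuclideanSpace ℝ (Fin n) → ℝ)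
    (u₀ u₁ : EuclideanSpace ℝ (Fin n))
    (hg₀ : HasGradientAt g₀ u₀ x) (hg₁ : HasGradientAt g₁ u₁ x)
    (hh₀ : ∃ K : NNReal, ∃ U ∈ nhds x, LipschitzOnWith K h₀ U)
    (hh₁ : ∃ K : NNReal, ∃ U ∈ nhds x, LipschitzOnWith K h₁ U)
    (v₀ v₁ : EuclideanSpace ℝ (Fin n))
    (hv₀ : upperDirDeriv (fun y => -h₀ y) x d ≤ ⟪-v₀, d⟫)
    (hv₁ : upperDirDeriv (fun y => -h₁ y) x d ≤ ⟪-v₁, d⟫)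
    (lam : ℝ) (hlam : lam ∈ Set.Icc (0 : ℝ) 1)
    (hc1 : lam * min ((g₁ x - h₁ x) + ⟪u₁ - v₁, d⟫) 0 = 0)
    (hc2 : (1 - lam) * max ((g₁ x - h₁ x) + ⟪u₁ - v₁, d⟫) 0 = 0)
    (hvi : ∀ u ∈ X,
      0 ≤ ⟪(1 / p) • (u₀ - v₀) + lam • (u₁ - v₁) + α • d, u - (x + d)⟫) :
    upperDirDeriv (fun y => (1 / p) * (g₀ y - h₀ y) + max (g₁ y - h₁ y) 0) x d ≤
        (1 / p) * ⟪u₀ - v₀, d⟫ + lam * ⟪u₁ - v₁, d⟫ ∧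
      (1 / p) * ⟪u₀ - v₀, d⟫ + lam * ⟪u₁ - v₁, d⟫ ≤ -α * ‖d‖ ^ 2 := by
  obtain ⟨hlam0, hlam1⟩ := hlam
  set s : ℝ := ⟪u₁ - v₁, d⟫ with hs
  set s₀ : ℝ := ⟪u₀ - v₀, d⟫ with hs0
  set c : ℝ := g₁ x - h₁ x with hc
  -- inner product decompositions
  have hsplit₁ : s = ⟪u₁, d⟫ + ⟪-v₁, d⟫ := by
    rw [hs, inner_sub_left, inner_neg_left]; ring
  have hsplit₀ : s₀ = ⟪u₀, d⟫ + ⟪-v₀, d⟫ := by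
    rw [hs0, inner_sub_left, inner_neg_left]; ring
  -- second inequality
  have hsecond : (1 / p) * s₀ + lam * s ≤ -α * ‖d‖ ^ 2 := by
    have h := hvi x hx
    have hxd : x - (x + d) = -d := by abel
    rw [hxd, inner_neg_right, inner_add_left, inner_add_left, real_inner_smul_left,
      real_inner_smul_left, real_inner_smul_left, real_inner_self_eq_norm_sq] at h
    rw [← hs, ← hs0] at h
    nlinarith [h]
  -- complementarity case facts
  have factpos : 0 < c → s ≤ lam * s := by
    intro hcpos
    rcases le_or_gt s 0 with hsle | hsgt
    · nlinarith
    · have : max (c + s) 0 = c + s := max_eq_left (by linarith)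
      rw [this] at hc2
      have : lam = 1 := by
        rcases mul_eq_zero.mp hc2 with h | h
        · linarith
        · exfalso; linarith
      rw [this]; ring_nf; exact le_refl _
  have factneg : c < 0 → 0 ≤ lam * s := by
    intro hcneg
    rcases lt_or_ge (c + s) 0 with hlt | hge
    · have hmin : min (c + s) 0 = c + s := min_eq_left (by linarith)
      rw [hmin] at hc1
      rcases mul_eq_zero.mp hc1 with h | h
      · rw [h]; ring_nf; exact le_refl _
      · exfalso; linarith
    · have : 0 < s := by linarith
      positivity
  have factzero : c = 0 → max s 0 ≤ lam * s := by
    intro hc0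
    rcases lt_trichotomy s 0 with hsn | hs0' | hsp
    · have hmin : min (c + s) 0 = c + s := min_eq_left (by linarith)
      rw [hmin, hc0, zero_add] at hc1
      rcases mul_eq_zero.mp hc1 with h | h
      · rw [h, max_eq_right hsn.le]; simp
      · exfalso; linarith
    · rw [hs0']; simp
    · have hmax : max (c + s) 0 = c + s := max_eq_left (by linarith)
      rw [hmax, hc0, zero_add] at hc2
      rcases mul_eq_zero.mp hc2 with h | h
      · have : lam = 1 := by linarith
        rw [this, max_eq_left hsp.le, one_mul]
      · exfalso; linarith
  -- first inequality
  refine ⟨?_, hsecond⟩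
  set L := nhdsWithin (0:ℝ) (Set.Ioi 0) with hL
  haveI hLb : L.NeBot := by rw [hL]; exact nhdsGT_neBot 0
  set F : ℝ → ℝ := fun t =>
    ((1 / p) * (g₀ (x + t • d) - h₀ (x + t • d)) + max (g₁ (x + t • d) - h₁ (x + t • d)) 0
      - ((1 / p) * (g₀ x - h₀ x) + max (g₁ x - h₁ x) 0)) / t with hF
  have hFdef : upperDirDeriv (fun y => (1 / p) * (g₀ y - h₀ y) + max (g₁ y - h₁ y) 0) x d
      = limsup F L := rfl
  set M : ℝ → ℝ := fun t => (max (g₁ (x + t • d) - h₁ (x + t • d)) 0 - max c 0) / t with hM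
  set A : ℝ → ℝ := fun t => (g₀ (x + t • d) - g₀ x) / t with hA
  set B₀ : ℝ → ℝ := fun t => (-h₀ (x + t • d) + h₀ x) / t with hB
  have hFsplit : ∀ t : ℝ, 0 < t → F t = (1 / p) * (A t + B₀ t) + M t := by
    intro t ht
    show ((1 / p) * (g₀ (x + t • d) - h₀ (x + t • d)) + max (g₁ (x + t • d) - h₁ (x + t • d)) 0
        - ((1 / p) * (g₀ x - h₀ x) + max (g₁ x - h₁ x) 0)) / t
      = (1 / p) * ((g₀ (x + t • d) - g₀ x) / t + (-h₀ (x + t • d) + h₀ x) / t)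
        + (max (g₁ (x + t • d) - h₁ (x + t • d)) 0 - max (g₁ x - h₁ x) 0) / t
    field_simp
    ring
  set Q : ℝ → ℝ := fun t => (g₁ (x + t • d) - h₁ (x + t • d) - c) / t with hQ
  have hQsplit : ∀ t : ℝ, 0 < t →
      Q t = (g₁ (x + t • d) - g₁ x) / t + (-h₁ (x + t • d) + h₁ x) / t := by
    intro t ht
    show (g₁ (x + t • d) - h₁ (x + t • d) - (g₁ x - h₁ x)) / t
      = (g₁ (x + t • d) - g₁ x) / t + (-h₁ (x + t • d) + h₁ x) / t
    field_simp
    ring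
  have hQev : ∀ ε : ℝ, 0 < ε → ∀ᶠ t in L, Q t < s + ε := by
    intro ε hε
    have h1 := (grad_slope hg₁).eventually_lt_const
      (show ⟪u₁, d⟫ < ⟪u₁, d⟫ + ε / 2 by linarith)
    have h2 := ev_lt_of_upper hh₁ hv₁ (show (0:ℝ) < ε / 2 by linarith)
    filter_upwards [h1, h2, self_mem_nhdsWithin] with t ht1 ht2 ht
    rw [hQsplit t ht, hsplit₁]
    calc (g₁ (x + t • d) - g₁ x) / t + (-h₁ (x + t • d) + h₁ x) / t
        < (⟪u₁, d⟫ + ε / 2) + (⟪-v₁, d⟫ + ε / 2) := add_lt_add ht1 ht2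
      _ = ⟪u₁, d⟫ + ⟪-v₁, d⟫ + ε := by ring
  have hphicont : Tendsto (fun t : ℝ => g₁ (x + t • d) - h₁ (x + t • d)) L (nhds c) := by
    obtain ⟨K, U, hU, hlip⟩ := hh₁
    have hg1c : ContinuousAt g₁ x := hg₁.hasFDerivAt.continuousAt
    have hh1c : ContinuousAt h₁ x := hlip.continuousOn.continuousAt hU
    exact ((hg1c.sub hh1c).tendsto).comp (path_tendsto x d)
  have hMev : ∀ ε : ℝ, 0 < ε → ∀ᶠ t in L, M t ≤ lam * s + ε := by
    intro ε hε
    rcases lt_trichotomy c 0 with hcn | hc0 | hcp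
    · have hev := hphicont.eventually_lt_const hcn
      filter_upwards [hev, self_mem_nhdsWithin] with t htn ht
      show (max (g₁ (x + t • d) - h₁ (x + t • d)) 0 - max c 0) / t ≤ lam * s + ε
      rw [max_eq_right htn.le, max_eq_right hcn.le, sub_zero, zero_div]
      linarith [factneg hcn]
    · filter_upwards [hQev ε hε, self_mem_nhdsWithin] with t htq htpos
      have ht0 : (0:ℝ) < t := htpos
      show (max (g₁ (x + t • d) - h₁ (x + t • d)) 0 - max c 0) / t ≤ lam * s + ε
      rw [hc0, max_self, sub_zero]
      have hQt : Q t = (g₁ (x + t • d) - h₁ (x + t • d)) / t := by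
        show (g₁ (x + t • d) - h₁ (x + t • d) - c) / t = _
        rw [hc0, sub_zero]
      rw [← max_div_div_right ht0.le, zero_div, ← hQt]
      have h1 : max (Q t) 0 ≤ max (s + ε) 0 := max_le_max htq.le (le_refl 0)
      have h2 : max (s + ε) 0 ≤ max s 0 + ε := by
        rcases le_total (s + ε) 0 with h | h
        · rw [max_eq_right h]; have := le_max_right s (0:ℝ); linarith
        · rcases le_total s 0 with h' | h'
          · rw [max_eq_left h, max_eq_right h']; linarith
          · rw [max_eq_left h, max_eq_left h']
      linarith [factzero hc0]
    · have hev := hphicont.eventually_const_lt hcp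
      filter_upwards [hev, hQev ε hε, self_mem_nhdsWithin] with t htp htq ht
      show (max (g₁ (x + t • d) - h₁ (x + t • d)) 0 - max c 0) / t ≤ lam * s + ε
      rw [max_eq_left htp.le, max_eq_left hcp.le]
      have hq : (g₁ (x + t • d) - h₁ (x + t • d) - c) / t = Q t := rfl
      rw [hq]
      linarith [factpos hcp]
  -- coboundedness: eventual lower bound on F
  obtain ⟨C₀, hC₀⟩ := lip_bound d hh₀
  obtain ⟨C₁, hC₁⟩ := lip_bound d hh₁
  have hAlow := (grad_slope hg₀).eventually_const_lt
    (show ⟪u₀, d⟫ - 1 < ⟪u₀, d⟫ by linarith)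
  have hg1abs := ((grad_slope hg₁).abs).eventually_lt_const (lt_add_one |⟪u₁, d⟫|)
  have hp' : (0:ℝ) < 1 / p := by positivity
  have hcobdd : IsCoboundedUnder (· ≤ ·) L F := by
    apply isCoboundedUnder_le_of_eventually_le L (x := (1 / p) * ((⟪u₀, d⟫ - 1) + -C₀)
      + -(|⟪u₁, d⟫| + 1 + C₁))
    filter_upwards [hAlow, hC₀, hC₁, hg1abs, self_mem_nhdsWithin] with t h1 h2 h3 h4 ht
    have ht0 : (0:ℝ) < t := ht
    rw [hFsplit t ht0]
    have hB0low : -C₀ ≤ B₀ t := by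
      show -C₀ ≤ (-h₀ (x + t • d) + h₀ x) / t
      have he : (-h₀ (x + t • d) + h₀ x) / t = -((h₀ (x + t • d) - h₀ x) / t) := by ring
      rw [he]
      linarith [le_abs_self ((h₀ (x + t • d) - h₀ x) / t)]
    have hMlow : -(|⟪u₁, d⟫| + 1 + C₁) ≤ M t := by
      have habs : |M t| ≤ |Q t| := by
        show |(max (g₁ (x + t • d) - h₁ (x + t • d)) 0 - max c 0) / t|
          ≤ |(g₁ (x + t • d) - h₁ (x + t • d) - c) / t|
        rw [abs_div, abs_div, div_le_div_iff_of_pos_right (abs_pos.mpr ht0.ne')]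
        exact abs_max_sub_max_le_abs _ _ _
      have hq2 : |Q t| ≤ |(g₁ (x + t • d) - g₁ x) / t| + |(-h₁ (x + t • d) + h₁ x) / t| := by
        rw [hQsplit t ht0]; exact abs_add_le _ _
      have hh1b : |(-h₁ (x + t • d) + h₁ x) / t| ≤ C₁ := by
        have he : (-h₁ (x + t • d) + h₁ x) / t = -((h₁ (x + t • d) - h₁ x) / t) := by ring
        rw [he, abs_neg]; exact h3
      have := neg_abs_le (M t)
      have habs' : |M t| ≤ |⟪u₁, d⟫| + 1 + C₁ := by
        calc |M t| ≤ |Q t| := habs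
          _ ≤ |(g₁ (x + t • d) - g₁ x) / t| + |(-h₁ (x + t • d) + h₁ x) / t| := hq2
          _ ≤ (|⟪u₁, d⟫| + 1) + C₁ := add_le_add h4.le hh1b
      linarith
    have hsum : (⟪u₀, d⟫ - 1) + -C₀ ≤ A t + B₀ t := by
      have : ⟪u₀, d⟫ - 1 < A t := h1
      linarith
    have := mul_le_mul_of_nonneg_left hsum hp'.le
    linarith
  rw [hFdef]
  apply le_of_forall_pos_le_add
  intro ε hε
  apply limsup_le_of_le hcobdd
  have hεp4 : 0 < ε * p / 4 := by positivity
  have hA' := (grad_slope hg₀).eventually_lt_const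
    (show ⟪u₀, d⟫ < ⟪u₀, d⟫ + ε * p / 4 by linarith)
  have hB' := ev_lt_of_upper hh₀ hv₀ hεp4
  have hM' := hMev (ε / 2) (by linarith)
  filter_upwards [hA', hB', hM', self_mem_nhdsWithin] with t h1 h2 h3 ht
  have ht0 : (0:ℝ) < t := ht
  rw [hFsplit t ht0]
  have hAt : A t < ⟪u₀, d⟫ + ε * p / 4 := h1
  have hBt : B₀ t < ⟪-v₀, d⟫ + ε * p / 4 := h2
  have hsum : A t + B₀ t ≤ s₀ + ε * p / 2 := by rw [hsplit₀]; linarith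
  have h4 : (1 / p) * (A t + B₀ t) ≤ (1 / p) * (s₀ + ε * p / 2) :=
    mul_le_mul_of_nonneg_left hsum hp'.le
  have h5 : (1 / p) * (s₀ + ε * p / 2) = (1 / p) * s₀ + ε / 2 := by
    field_simp
  linarith
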